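/- Let 1 ≤ r ≤ n, let a₁ and a_{r+1},…,a_n be reals with a_{r+1},…,a_n pairwise distinct and all distinct from a₁, set F(a) = (a-a₁)^r ∏_{i=r+1}^n (a-aᵢ), let ε₁,…,ε_n ∈ {-1,1} with Δᵢ(a) = εᵢ(a-aᵢ) (taking ε with index 1 for a₁), and let I ⊆ ℝ be an open interval on which all Δᵢ > 0. Then every function x(a) = ∑_{k=1}^{r} μ_k Δ₁(a)^{1/2−k} + ∑_{i=r+1}^n ξᵢ Δᵢ(a)^{-1/2}, with μ_k, ξᵢ ∈ ℝ, satisfies Op_n[F]x = 0 on I. -/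

import Mathlib

open Polynomial

/-- The Pochhammer symbol `(1/2)_s`. -/
noncomputable def poch (s : ℕ) : ℝ := (ascPochhammer ℝ s).eval (1/2 : ℝ)

/-- The operator `Op_n[F]` acting on `h`:
`(Op_n[F]h)(a) = ∑_{s=0}^{n} F^{(n-s)}(a)/(n-s)! · h^{(s)}(a)/(1/2)_s`. -/
noncomputable def Op (n : ℕ) (F h : ℝ → ℝ) (a : ℝ) : ℝ :=
  ∑ s ∈ Finset.range (n + 1),
    iteratedDeriv (n - s) F a / (Nat.factorial (n - s) : ℝ) *
      (iteratedDeriv s h a / poch s)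


open Finset

lemma poch_eq_prod (s : ℕ) : poch s = ∏ j ∈ range s, ((1/2 : ℝ) + j) := by
  induction s with
  | zero => simp [poch]
  | succ s ih =>
    rw [poch, ascPochhammer_succ_eval, ← poch, ih, prod_range_succ]

lemma poch_pos (s : ℕ) : 0 < poch s := by
  rw [poch_eq_prod]
  apply Finset.prod_pos
  intro j _
  positivity

lemma fd_zero_fun (m : ℕ) : (fwdDiff (1:ℝ))^[m] (fun _ : ℝ => (0:ℝ)) = fun _ => 0 := by
  induction m with
  | zero => rfl
  | succ m ih =>
    rw [Function.iterate_succ_apply,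
      show fwdDiff (1:ℝ) (fun _ : ℝ => (0:ℝ)) = fun _ => 0 from funext fun y => by
        simp [fwdDiff], ih]

lemma fd_poly (m : ℕ) (P : Polynomial ℝ) (hP : P.natDegree < m) :
    (fwdDiff (1:ℝ))^[m] (fun t : ℝ => P.eval t) = fun _ => 0 := by
  induction m generalizing P with
  | zero => exact absurd hP (Nat.not_lt_zero _)
  | succ m ih =>
    rw [Function.iterate_succ_apply]
    have hQ : fwdDiff (1:ℝ) (fun t : ℝ => P.eval t)
        = fun t : ℝ => (P.comp (X + C 1) - P).eval t := by
      funext y; simp [fwdDiff, eval_comp]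
    rw [hQ]
    by_cases h0 : P.comp (X + C 1) - P = 0
    · rw [h0]
      simpa using fd_zero_fun m
    · apply ih
      have hP0 : P ≠ 0 := by rintro rfl; simp at h0
      have hX : (X + C (1:ℝ)).natDegree = 1 := natDegree_X_add_C 1
      have hlc : (P.comp (X + C 1)).leadingCoeff = P.leadingCoeff := by
        rw [leadingCoeff_comp (by rw [hX]; norm_num), (monic_X_add_C (1:ℝ)).leadingCoeff,
          one_pow, mul_one]
      have hc0 : P.comp (X + C 1) ≠ 0 := by
        intro h
        apply hP0
        rw [← leadingCoeff_eq_zero, ← hlc, h, leadingCoeff_zero]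
      have hdeg : (P.comp (X + C 1)).degree = P.degree := by
        rw [degree_eq_natDegree hc0, degree_eq_natDegree hP0, natDegree_comp, hX, mul_one]
      have hlt := natDegree_lt_natDegree h0 (degree_sub_lt hdeg hc0 hlc)
      have hnd : (P.comp (X + C 1)).natDegree = P.natDegree := by
        rw [natDegree_comp, hX, mul_one]
      omega

lemma comb (m : ℕ) (P : Polynomial ℝ) (hP : P.natDegree < m) :
    ∑ t ∈ range (m + 1), (-1 : ℝ) ^ t * (m.choose t : ℝ) * P.eval (t : ℝ) = 0 := by
  have h0 := fwdDiff_iter_eq_sum_shift (1:ℝ) (fun t : ℝ => P.eval t) m 0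
  rw [fd_poly m P hP] at h0
  have h1 : ∑ t ∈ range (m + 1), (-1 : ℝ) ^ (m - t) * (m.choose t : ℝ) * P.eval (t:ℝ) = 0 := by
    rw [eq_comm] at h0
    simpa [zsmul_eq_mul, nsmul_eq_mul, mul_assoc] using h0
  have h2 : ∀ t ∈ range (m+1), (-1:ℝ)^(m-t) = (-1)^m * (-1)^t := by
    intro t ht
    rw [mem_range] at ht
    have hmt : m - t + 2 * t = m + t := by omega
    calc (-1:ℝ)^(m-t) = (-1)^(m-t) * ((-1:ℝ)^2)^t := by norm_num
    _ = (-1:ℝ)^(m - t + 2*t) := by rw [pow_add, pow_mul]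
    _ = (-1:ℝ)^(m+t) := by rw [hmt]
    _ = (-1:ℝ)^m * (-1)^t := pow_add _ _ _
  have h3 : (-1:ℝ)^m * ∑ t ∈ range (m+1), (-1:ℝ)^t * (m.choose t:ℝ) * P.eval (t:ℝ) = 0 := by
    rw [mul_sum, ← h1]
    refine sum_congr rfl fun t ht => ?_
    rw [h2 t ht]; ring
  rcases mul_eq_zero.mp h3 with h | h
  · exact absurd h (pow_ne_zero _ (by norm_num))
  · exact h

lemma iteratedDerivWithin_of_isOpen' (j : ℕ) (f : ℝ → ℝ) {U : Set ℝ} (hU : IsOpen U)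
    {x : ℝ} (hx : x ∈ U) : iteratedDerivWithin j f U x = iteratedDeriv j f x := by
  unfold iteratedDerivWithin iteratedDeriv
  rw [iteratedFDerivWithin_of_isOpen j hU hx]

lemma iteratedDeriv_add_on {U : Set ℝ} (hU : IsOpen U) {x : ℝ} (hx : x ∈ U) (j : ℕ)
    {f g : ℝ → ℝ} (hf : ContDiffOn ℝ j f U) (hg : ContDiffOn ℝ j g U) :
    iteratedDeriv j (fun u => f u + g u) x = iteratedDeriv j f x + iteratedDeriv j g x := by
  rw [← iteratedDerivWithin_of_isOpen' j _ hU hx, ← iteratedDerivWithin_of_isOpen' j f hU hx,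
    ← iteratedDerivWithin_of_isOpen' j g hU hx]
  exact iteratedDerivWithin_add hx hU.uniqueDiffOn (hf x hx) (hg x hx)

lemma iteratedDeriv_const_mul_on {U : Set ℝ} (hU : IsOpen U) {x : ℝ} (hx : x ∈ U) (j : ℕ)
    (c : ℝ) {f : ℝ → ℝ} (hf : ContDiffOn ℝ j f U) :
    iteratedDeriv j (fun u => c * f u) x = c * iteratedDeriv j f x := by
  rw [← iteratedDerivWithin_of_isOpen' j _ hU hx, ← iteratedDerivWithin_of_isOpen' j f hU hx]
  exact iteratedDerivWithin_const_mul hx hU.uniqueDiffOn c (hf x hx)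

lemma iteratedDeriv_zero_fun (j : ℕ) : iteratedDeriv j (fun _ : ℝ => (0:ℝ)) = fun _ => 0 := by
  induction j with
  | zero => exact iteratedDeriv_zero
  | succ j ih =>
    rw [iteratedDeriv_succ, ih]
    funext x
    simp

lemma iteratedDeriv_sum_on {ι : Type*} {U : Set ℝ} (hU : IsOpen U) {x : ℝ} (hx : x ∈ U) (j : ℕ)
    (S : Finset ι) (f : ι → ℝ → ℝ) (hf : ∀ i ∈ S, ContDiffOn ℝ j (f i) U) :
    iteratedDeriv j (fun u => ∑ i ∈ S, f i u) x = ∑ i ∈ S, iteratedDeriv j (f i) x := by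
  classical
  induction S using Finset.induction_on with
  | empty =>
    simpa using congrFun (iteratedDeriv_zero_fun j) x
  | @insert a S ha ih =>
    rw [show (fun u => ∑ i ∈ insert a S, f i u) = fun u => f a u + ∑ i ∈ S, f i u from
      funext fun u => by rw [Finset.sum_insert ha]]
    rw [iteratedDeriv_add_on hU hx j (hf a (mem_insert_self a S))
      (ContDiffOn.sum fun i hi => hf i (mem_insert_of_mem hi))]
    rw [ih (fun i hi => hf i (mem_insert_of_mem hi)), Finset.sum_insert ha]

lemma Op_add_on (n : ℕ) (F : ℝ → ℝ) {U : Set ℝ} (hU : IsOpen U) {t : ℝ} (ht : t ∈ U)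
    (f g : ℝ → ℝ) (hf : ContDiffOn ℝ n f U) (hg : ContDiffOn ℝ n g U) :
    Op n F (fun u => f u + g u) t = Op n F f t + Op n F g t := by
  unfold Op
  rw [← sum_add_distrib]
  refine sum_congr rfl fun s hs => ?_
  rw [mem_range] at hs
  have hs' : (s : WithTop ℕ∞) ≤ (n : WithTop ℕ∞) := by
    exact_mod_cast Nat.lt_succ_iff.mp hs
  rw [iteratedDeriv_add_on hU ht s (hf.of_le hs') (hg.of_le hs')]
  ring

lemma Op_const_mul_on (n : ℕ) (F : ℝ → ℝ) {U : Set ℝ} (hU : IsOpen U) {t : ℝ} (ht : t ∈ U)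
    (c : ℝ) (f : ℝ → ℝ) (hf : ContDiffOn ℝ n f U) :
    Op n F (fun u => c * f u) t = c * Op n F f t := by
  unfold Op
  rw [mul_sum]
  refine sum_congr rfl fun s hs => ?_
  rw [mem_range] at hs
  have hs' : (s : WithTop ℕ∞) ≤ (n : WithTop ℕ∞) := by
    exact_mod_cast Nat.lt_succ_iff.mp hs
  rw [iteratedDeriv_const_mul_on hU ht s c (hf.of_le hs')]
  ring

lemma Op_sum_on {ι : Type*} (n : ℕ) (F : ℝ → ℝ) {U : Set ℝ} (hU : IsOpen U) {t : ℝ} (ht : t ∈ U)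
    (S : Finset ι) (f : ι → ℝ → ℝ) (hf : ∀ i ∈ S, ContDiffOn ℝ n (f i) U) :
    Op n F (fun u => ∑ i ∈ S, f i u) t = ∑ i ∈ S, Op n F (f i) t := by
  unfold Op
  have hcong : ∀ s ∈ range (n+1),
      iteratedDeriv (n - s) F t / ((Nat.factorial (n - s)) : ℝ) *
        (iteratedDeriv s (fun u => ∑ i ∈ S, f i u) t / poch s)
      = ∑ i ∈ S, iteratedDeriv (n - s) F t / ((Nat.factorial (n - s)) : ℝ) *
          (iteratedDeriv s (f i) t / poch s) := by
    intro s hs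
    rw [mem_range] at hs
    have hs' : (s : WithTop ℕ∞) ≤ (n : WithTop ℕ∞) := by
      exact_mod_cast Nat.lt_succ_iff.mp hs
    rw [iteratedDeriv_sum_on hU ht s S f (fun i hi => (hf i hi).of_le hs'), sum_div, mul_sum]
  rw [sum_congr rfl hcong, sum_comm]

lemma basis_contDiffOn {N : WithTop ℕ∞} (ε b p : ℝ) {U : Set ℝ}
    (hU : ∀ u ∈ U, 0 < ε * (u - b)) :
    ContDiffOn ℝ N (fun u => (ε * (u - b)) ^ p) U := by
  intro u hu
  have h1 : ContDiffAt ℝ N (fun v : ℝ => ε * (v - b)) u :=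
    contDiffAt_const.mul (contDiffAt_id.sub contDiffAt_const)
  have h2 : ContDiffAt ℝ N (fun y : ℝ => y ^ p) (ε * (u - b)) :=
    Real.contDiffAt_rpow_const_of_ne (ne_of_gt (hU u hu))
  exact (h2.comp u h1).contDiffWithinAt

lemma iteratedDeriv_polyeval (P : Polynomial ℝ) (j : ℕ) (a : ℝ) :
    iteratedDeriv j (fun u => P.eval u) a = (Polynomial.derivative^[j] P).eval a := by
  induction j generalizing P with
  | zero => simp
  | succ j ih =>
    rw [iteratedDeriv_succ']
    have hd : deriv (fun u => P.eval u) = fun u => P.derivative.eval u :=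
      funext fun u => Polynomial.deriv P
    rw [hd, ih, Function.iterate_succ_apply]

lemma iteratedDeriv_rpow_lin (ε b p : ℝ) (hε : ε * ε = 1) (s : ℕ) :
    ∀ a : ℝ, 0 < ε * (a - b) →
      iteratedDeriv s (fun u => (ε * (u - b)) ^ p) a
        = (∏ j ∈ range s, (p - j)) * ((ε * (a - b)) ^ p / (a - b) ^ s) := by
  induction s with
  | zero => intro a ha; simp
  | succ s ih =>
    intro a ha
    have hεne : ε ≠ 0 := by intro h; rw [h] at hε; norm_num at hε
    have hane : a - b ≠ 0 := by
      intro h; rw [h, mul_zero] at ha; exact lt_irrefl 0 ha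
    have hU : IsOpen {u : ℝ | 0 < ε * (u - b)} :=
      isOpen_lt continuous_const (by continuity)
    rw [iteratedDeriv_succ]
    have hev : (iteratedDeriv s (fun u => (ε * (u - b)) ^ p))
        =ᶠ[nhds a] fun u => (∏ j ∈ range s, (p - j)) * ((ε * (u - b)) ^ p * ((u - b) ^ s)⁻¹) := by
      filter_upwards [hU.mem_nhds ha] with u hu
      rw [ih u hu, div_eq_mul_inv]
    rw [hev.deriv_eq]
    have hinner : HasDerivAt (fun u : ℝ => ε * (u - b)) ε a := by
      simpa using ((hasDerivAt_id a).sub_const b).const_mul ε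
    have h1 : HasDerivAt (fun u : ℝ => (ε * (u - b)) ^ p)
        (p * (ε * (a - b)) ^ (p - 1) * ε) a :=
      by have := (Real.hasDerivAt_rpow_const (x := ε * (a - b)) (p := p) (Or.inl (ne_of_gt ha))).comp a hinner; exact this
    have h2 : HasDerivAt (fun u : ℝ => ((u - b) ^ s)⁻¹)
        (-((s : ℝ) * (a - b) ^ (s - 1) * 1) / ((a - b) ^ s) ^ 2) a :=
      (((hasDerivAt_id a).sub_const b).pow s).inv (pow_ne_zero s hane)
    have h3 : HasDerivAt
        (fun u => (∏ j ∈ range s, (p - j)) * ((ε * (u - b)) ^ p * ((u - b) ^ s)⁻¹))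
        ((∏ j ∈ range s, (p - j)) *
          ((p * (ε * (a - b)) ^ (p - 1) * ε) * ((a - b) ^ s)⁻¹ +
            (ε * (a - b)) ^ p * (-((s : ℝ) * (a - b) ^ (s - 1) * 1) / ((a - b) ^ s) ^ 2))) a :=
      (h1.mul h2).const_mul _
    rw [h3.deriv]
    have hkey : (ε * (a - b)) ^ (p - 1) * ε = (ε * (a - b)) ^ p / (a - b) := by
      rw [Real.rpow_sub ha, Real.rpow_one]
      field_simp
    rw [prod_range_succ,
      show p * (ε * (a - b)) ^ (p - 1) * ε = p * ((ε * (a - b)) ^ p / (a - b)) from by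
        rw [mul_assoc, hkey]]
    cases s with
    | zero => field_simp; push_cast; ring
    | succ s' =>
      have hs1 : s' + 1 - 1 = s' := rfl
      rw [hs1]
      have hps : ((s' + 1 : ℕ) : ℝ) = (s' : ℝ) + 1 := by push_cast; ring
      rw [hps]
      field_simp
      ring

lemma prod_shift (w s : ℕ) :
    (∏ j ∈ range s, ((w:ℝ) + 1/2 + j)) * (∏ j ∈ range w, ((1/2:ℝ) + j))
      = (∏ j ∈ range w, ((s:ℝ) + 1/2 + j)) * (∏ j ∈ range s, ((1/2:ℝ) + j)) := by
  have e1 : (∏ j ∈ range s, ((w:ℝ) + 1/2 + j))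
      = ∏ j ∈ range s, ((1/2:ℝ) + ((w + j : ℕ):ℝ)) :=
    prod_congr rfl (fun j _ => by push_cast; ring)
  have e2 : (∏ j ∈ range w, ((s:ℝ) + 1/2 + j))
      = ∏ j ∈ range w, ((1/2:ℝ) + ((s + j : ℕ):ℝ)) :=
    prod_congr rfl (fun j _ => by push_cast; ring)
  rw [e1, e2, mul_comm, ← Finset.prod_range_add (fun j => (1/2:ℝ) + (j:ℝ)) w s,
    mul_comm (∏ j ∈ range w, ((1/2:ℝ) + ((s + j : ℕ):ℝ))) _,
    ← Finset.prod_range_add (fun j => (1/2:ℝ) + (j:ℝ)) s w, Nat.add_comm]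

lemma key (n k : ℕ) (hk : 1 ≤ k) (b ε a : ℝ) (hε : ε * ε = 1) (ha : 0 < ε * (a - b))
    (P : Polynomial ℝ) (hdeg : P.natDegree ≤ n) (hdvd : (X - C b) ^ k ∣ P) :
    Op n (fun u => P.eval u) (fun u => (ε * (u - b)) ^ ((1/2 : ℝ) - (k : ℝ))) a = 0 := by
  classical
  have hane : a - b ≠ 0 := by
    intro h; rw [h, mul_zero] at ha; exact lt_irrefl 0 ha
  set p : ℝ := (1/2 : ℝ) - (k : ℝ) with hp
  set w : ℕ := k - 1 with hw
  set c : ℕ → ℝ := fun m => (Polynomial.taylor b P).coeff m with hcdef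
  have hPsum : P = ∑ m ∈ range (n + 1), Polynomial.C (c m) * (X - Polynomial.C b) ^ m := by
    conv_lhs => rw [← Polynomial.sum_taylor_eq P b]
    exact Polynomial.sum_over_range' (Polynomial.taylor b P) (fun m => by simp) (n+1)
      (by rw [natDegree_taylor]; omega)
  have hXk : (X : Polynomial ℝ) ^ k ∣ Polynomial.taylor b P := by
    obtain ⟨G, hG⟩ := hdvd
    refine ⟨Polynomial.taylor b G, ?_⟩
    rw [hG, taylor_mul]
    congr 1
    simp [taylor_apply, pow_comp, sub_comp]
  have hc0 : ∀ m, m < k → c m = 0 := fun m hm => Polynomial.X_pow_dvd_iff.mp hXk m hm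
  have hD : ∀ j, (Polynomial.derivative^[j] P).eval a
      = ∑ m ∈ range (n + 1), c m * ((m.descFactorial j : ℝ) * (a - b) ^ (m - j)) := by
    intro j
    conv_lhs => rw [hPsum]
    rw [Polynomial.iterate_derivative_sum, Polynomial.eval_finset_sum]
    refine sum_congr rfl fun m _ => ?_
    rw [Polynomial.iterate_derivative_C_mul, Polynomial.iterate_derivative_X_sub_pow]
    simp [eval_mul, eval_pow, mul_assoc]
  have hder : ∀ s : ℕ, iteratedDeriv s (fun u => (ε * (u - b)) ^ p) a
      = (∏ j ∈ range s, (p - j)) * ((ε * (a - b)) ^ p / (a - b) ^ s) :=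
    fun s => iteratedDeriv_rpow_lin ε b p hε s a ha
  set x : ℝ := (ε * (a - b)) ^ p with hxdef
  have hOp : Op n (fun u => P.eval u) (fun u => (ε * (u - b)) ^ p) a
      = ∑ s ∈ range (n+1), ∑ m ∈ range (n+1),
          c m * ((m.descFactorial (n-s) : ℝ) * (a-b)^(m-(n-s)) / (Nat.factorial (n-s) : ℝ)
            * ((∏ j ∈ range s, (p - j)) * (x / (a - b) ^ s) / poch s)) := by
    unfold Op
    refine sum_congr rfl fun s hs => ?_
    rw [iteratedDeriv_polyeval, hder s, hD (n-s), sum_div, sum_mul]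
    refine sum_congr rfl fun m _ => ?_
    ring
  rw [hOp, Finset.sum_comm]
  refine sum_eq_zero fun m hm => ?_
  rw [mem_range] at hm
  rw [← mul_sum]
  rcases lt_or_ge m k with hmk | hkm
  · rw [hc0 m hmk, zero_mul]
  · apply mul_eq_zero_of_right
    set q : ℕ := n - m with hq
    have hmn : m ≤ n := by omega
    have hPoldeg : (∏ j ∈ range w, (X + Polynomial.C ((q:ℝ) + 1/2 + j))).natDegree < m := by
      have h1 : (∏ j ∈ range w, (X + Polynomial.C ((q:ℝ) + 1/2 + j))).natDegree
          ≤ ∑ j ∈ range w, (X + Polynomial.C ((q:ℝ) + 1/2 + j)).natDegree :=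
        natDegree_prod_le _ _
      have h2 : ∑ j ∈ range w, (X + Polynomial.C ((q:ℝ) + 1/2 + j)).natDegree = w := by
        simp only [natDegree_X_add_C, sum_const, smul_eq_mul, mul_one, card_range]
      omega
    set K : ℝ := x / (a - b) ^ q * (-1 : ℝ) ^ q / poch w with hK
    rw [range_eq_Ico, ← Finset.sum_Ico_consecutive _ (Nat.zero_le q) (show q ≤ n+1 by omega),
      ← range_eq_Ico]
    have hzero : ∀ s ∈ range q,
        (m.descFactorial (n-s) : ℝ) * (a-b)^(m-(n-s)) / (Nat.factorial (n-s) : ℝ)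
          * ((∏ j ∈ range s, (p - j)) * (x / (a - b) ^ s) / poch s) = 0 := by
      intro s hs
      rw [mem_range] at hs
      have hlt : m < n - s := by omega
      rw [Nat.descFactorial_eq_zero_iff_lt.mpr hlt]
      simp
    rw [sum_eq_zero hzero, zero_add, Finset.sum_Ico_eq_sum_range,
      show n + 1 - q = m + 1 by omega]
    have hterm : ∀ t ∈ range (m+1),
        (m.descFactorial (n-(q+t)) : ℝ) * (a-b)^(m-(n-(q+t))) / (Nat.factorial (n-(q+t)) : ℝ)
          * ((∏ j ∈ range (q+t), (p - j)) * (x / (a - b) ^ (q+t)) / poch (q+t))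
        = K * ((-1:ℝ)^t * (m.choose t : ℝ) * (∏ j ∈ range w, (X + Polynomial.C ((q:ℝ) + 1/2 + j))).eval (t:ℝ)) := by
      intro t ht
      rw [mem_range] at ht
      have ht' : t ≤ m := by omega
      have h1 : n - (q + t) = m - t := by omega
      rw [h1, show m - (m - t) = t by omega]
      have hdf : (m.descFactorial (m - t) : ℝ)
          = ((m-t).factorial : ℝ) * (m.choose t : ℝ) := by
        rw [Nat.descFactorial_eq_factorial_mul_choose, Nat.choose_symm ht']
        push_cast; ring
      rw [hdf]
      have hprod : (∏ j ∈ range (q+t), (p - j))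
          = (-1:ℝ)^(q+t) * (poch (q+t) * (∏ j ∈ range w, (X + Polynomial.C ((q:ℝ) + 1/2 + j))).eval (t:ℝ) / poch w) := by
        have hkc : (k : ℝ) = (w : ℝ) + 1 := by
          have : k = w + 1 := by omega
          rw [this]; push_cast; ring
        have e1 : (∏ j ∈ range (q+t), (p - j))
            = ∏ j ∈ range (q+t), (-1) * ((w:ℝ) + 1/2 + j) :=
          prod_congr rfl (fun j _ => by rw [hp, hkc]; ring)
        rw [e1, prod_mul_distrib, prod_const, card_range]
        congr 1
        have hswap := prod_shift w (q+t)
        rw [← poch_eq_prod, ← poch_eq_prod] at hswap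
        have hPolEval : (∏ j ∈ range w, (X + Polynomial.C ((q:ℝ) + 1/2 + j))).eval (t:ℝ) = ∏ j ∈ range w, (((q+t:ℕ):ℝ) + 1/2 + j) := by
          rw [eval_prod]
          exact prod_congr rfl (fun j _ => by simp; push_cast; ring)
        rw [hPolEval, eq_div_iff (ne_of_gt (poch_pos w))]
        linear_combination hswap
      rw [hprod]
      have hpow : ((a:ℝ) - b)^(q+t) = (a-b)^q * (a-b)^t := pow_add _ q t
      rw [hpow, hK, pow_add (-1:ℝ) q t]
      have hfac : ((m-t).factorial : ℝ) ≠ 0 := Nat.cast_ne_zero.mpr (Nat.factorial_ne_zero _)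
      have hpoch1 : poch (q+t) ≠ 0 := ne_of_gt (poch_pos _)
      have hpochw : poch w ≠ 0 := ne_of_gt (poch_pos _)
      have habt : ((a:ℝ)-b)^t ≠ 0 := pow_ne_zero _ hane
      have habq : ((a:ℝ)-b)^q ≠ 0 := pow_ne_zero _ hane
      field_simp
    rw [sum_congr rfl hterm, ← mul_sum, comb m _ hPoldeg, mul_zero]

/-- For `F(a) = (a-a₁)^r ∏_{i=r+1}^n (a-aᵢ)` with `a₁` of multiplicity
`1 ≤ r ≤ n` and the remaining roots pairwise distinct and distinct from `a₁`, every function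
`x(a) = ∑_{k=1}^{r} μ_k Δ₁(a)^{1/2−k} + ∑_{i=r+1}^n ξᵢ Δᵢ(a)^{-1/2}` satisfies
`Op_n[F]x = 0` on the open interval `I` where all `Δᵢ > 0`. -/
theorem stmt14 (n r : ℕ) (hr : 1 ≤ r) (hrn : r ≤ n)
    (a₁ : ℝ) (as : ℕ → ℝ)
    (hdist : ∀ i ∈ Finset.Icc (r + 1) n, ∀ j ∈ Finset.Icc (r + 1) n, i ≠ j → as i ≠ as j)
    (hne : ∀ i ∈ Finset.Icc (r + 1) n, as i ≠ a₁)
    (ε₁ : ℝ) (hε₁ : ε₁ = 1 ∨ ε₁ = -1)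
    (εs : ℕ → ℝ) (hεs : ∀ i ∈ Finset.Icc (r + 1) n, εs i = 1 ∨ εs i = -1)
    (I : Set ℝ) (hIopen : IsOpen I) (hIconn : I.OrdConnected)
    (hΔ₁ : ∀ t ∈ I, 0 < ε₁ * (t - a₁))
    (hΔ : ∀ i ∈ Finset.Icc (r + 1) n, ∀ t ∈ I, 0 < εs i * (t - as i))
    (μ : ℕ → ℝ) (ξ : ℕ → ℝ) :
    ∀ t ∈ I,
      Op n (fun u => (u - a₁) ^ r * ∏ i ∈ Finset.Icc (r + 1) n, (u - as i))
        (fun u =>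
          (∑ k ∈ Finset.Icc 1 r, μ k * (ε₁ * (u - a₁)) ^ ((1/2 : ℝ) - (k : ℝ))) +
            ∑ i ∈ Finset.Icc (r + 1) n, ξ i * (εs i * (u - as i)) ^ (-(1/2) : ℝ)) t = 0 := by
  intro t ht
  have hε : ε₁ * ε₁ = 1 := by rcases hε₁ with h | h <;> rw [h] <;> norm_num
  set Pp : Polynomial ℝ :=
    (X - C a₁) ^ r * ∏ i ∈ Finset.Icc (r+1) n, (X - C (as i)) with hPp
  have hF : (fun u => (u - a₁) ^ r * ∏ i ∈ Finset.Icc (r + 1) n, (u - as i))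
      = fun u => Pp.eval u := by
    funext u
    rw [hPp]
    simp [eval_prod]
  rw [hF]
  have hPdeg : Pp.natDegree ≤ n := by
    have h1 : ((X - C a₁ : Polynomial ℝ) ^ r).natDegree = r := by
      simp [natDegree_pow, natDegree_X_sub_C]
    have h2 : (∏ i ∈ Finset.Icc (r+1) n, (X - C (as i) : Polynomial ℝ)).natDegree ≤ n - r := by
      calc (∏ i ∈ Finset.Icc (r+1) n, (X - C (as i) : Polynomial ℝ)).natDegree
          ≤ ∑ i ∈ Finset.Icc (r+1) n, (X - C (as i) : Polynomial ℝ).natDegree :=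
        natDegree_prod_le _ _
      _ = (Finset.Icc (r+1) n).card := by simp [natDegree_X_sub_C]
      _ = n - r := by rw [Nat.card_Icc]; omega
    calc Pp.natDegree ≤ ((X - C a₁ : Polynomial ℝ) ^ r).natDegree
        + (∏ i ∈ Finset.Icc (r+1) n, (X - C (as i) : Polynomial ℝ)).natDegree :=
      natDegree_mul_le
    _ ≤ r + (n - r) := add_le_add (le_of_eq h1) h2
    _ ≤ n := by omega
  have hfA : ∀ i ∈ Finset.Icc 1 r, ContDiffOn ℝ n
      (fun u => μ i * (ε₁ * (u - a₁)) ^ ((1/2 : ℝ) - (i : ℝ))) I :=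
    fun i _ => contDiffOn_const.mul (basis_contDiffOn ε₁ a₁ _ hΔ₁)
  have hfB : ∀ i ∈ Finset.Icc (r+1) n, ContDiffOn ℝ n
      (fun u => ξ i * (εs i * (u - as i)) ^ (-(1/2) : ℝ)) I :=
    fun i hi => contDiffOn_const.mul (basis_contDiffOn (εs i) (as i) _ (hΔ i hi))
  rw [Op_add_on n (fun u => Pp.eval u) hIopen ht
    (fun u => ∑ k ∈ Finset.Icc 1 r, μ k * (ε₁ * (u - a₁)) ^ ((1/2 : ℝ) - (k : ℝ)))
    (fun u => ∑ i ∈ Finset.Icc (r+1) n, ξ i * (εs i * (u - as i)) ^ (-(1/2) : ℝ))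
    (ContDiffOn.sum hfA) (ContDiffOn.sum hfB)]
  rw [Op_sum_on n (fun u => Pp.eval u) hIopen ht (Finset.Icc 1 r)
    (fun i => fun u => μ i * (ε₁ * (u - a₁)) ^ ((1/2 : ℝ) - (i : ℝ))) hfA]
  rw [Op_sum_on n (fun u => Pp.eval u) hIopen ht (Finset.Icc (r+1) n)
    (fun i => fun u => ξ i * (εs i * (u - as i)) ^ (-(1/2) : ℝ)) hfB]
  have hA0 : ∀ i ∈ Finset.Icc 1 r,
      Op n (fun u => Pp.eval u)
        (fun u => μ i * (ε₁ * (u - a₁)) ^ ((1/2 : ℝ) - (i : ℝ))) t = 0 := by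
    intro i hi
    rw [Finset.mem_Icc] at hi
    rw [Op_const_mul_on n (fun u => Pp.eval u) hIopen ht (μ i)
      (fun u => (ε₁ * (u - a₁)) ^ ((1/2 : ℝ) - (i : ℝ))) (basis_contDiffOn ε₁ a₁ _ hΔ₁)]
    rw [key n i hi.1 a₁ ε₁ t hε (hΔ₁ t ht) Pp hPdeg
      (dvd_mul_of_dvd_left (pow_dvd_pow _ hi.2) _), mul_zero]
  have hB0 : ∀ i ∈ Finset.Icc (r+1) n,
      Op n (fun u => Pp.eval u)
        (fun u => ξ i * (εs i * (u - as i)) ^ (-(1/2) : ℝ)) t = 0 := by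
    intro i hi
    have hεi : εs i * εs i = 1 := by rcases hεs i hi with h | h <;> rw [h] <;> norm_num
    have hre : (fun u => ξ i * (εs i * (u - as i)) ^ (-(1/2) : ℝ))
        = fun u => ξ i * (εs i * (u - as i)) ^ ((1/2 : ℝ) - ((1:ℕ) : ℝ)) := by
      norm_num
    rw [hre, Op_const_mul_on n (fun u => Pp.eval u) hIopen ht (ξ i)
      (fun u => (εs i * (u - as i)) ^ ((1/2 : ℝ) - ((1:ℕ) : ℝ))) (basis_contDiffOn (εs i) (as i) _ (hΔ i hi))]
    rw [key n 1 le_rfl (as i) (εs i) t hεi (hΔ i hi t ht) Pp hPdeg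
      (by rw [pow_one]; exact dvd_mul_of_dvd_right (Finset.dvd_prod_of_mem _ hi) _), mul_zero]
  rw [Finset.sum_eq_zero hA0, Finset.sum_eq_zero hB0, add_zero]
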